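/- Let n ≥ 4 be a natural number, let Λ, Λ₀, C be real constants with C > 0, and set σ(t) = t²/(16C) + C. If y : (0, ∞) → ℝ is differentiable and satisfies 2 y'(t) σ'(t) + 2 y(t) · ( (n−4) σ'(t)²/(2σ(t)) − 1/(4σ(t)) + σ''(t) ) − σ(t) Λ + Λ₀ = 0 for all t > 0, then there exists a real constant B such that y(t) = t · (t² + 16C²)^{−(n−2)/2} · ( B − ∫₁^t (16C² + s²)^{(n−2)/2} · (16C·Λ₀ − Λ·(16C² + s²)) / (4s²) ds ) for all t > 0. -/

import Mathlib

/-- Uniqueness part of the ODE analysis in Theorem 4.2: every solution on `(0,∞)`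
of the linear ODE (4.27) with `σ(t) = t²/(16C) + C` is given by formula (4.2) for
some constant `B`. -/
theorem stmt4 (n : ℕ) (hn : 4 ≤ n) (Λ Λ₀ C : ℝ) (hC : 0 < C)
    (σ : ℝ → ℝ) (hσ : ∀ t : ℝ, σ t = t ^ 2 / (16 * C) + C)
    (y : ℝ → ℝ)
    (hy_diff : ∀ t : ℝ, 0 < t → DifferentiableAt ℝ y t)
    (hy_ode : ∀ t : ℝ, 0 < t →
      2 * deriv y t * deriv σ t
          + 2 * y t * (((n : ℝ) - 4) * (deriv σ t) ^ 2 / (2 * σ t)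
              - 1 / (4 * σ t) + deriv (deriv σ) t)
          - σ t * Λ + Λ₀ = 0) :
    ∃ B : ℝ, ∀ t : ℝ, 0 < t →
      y t = t * (t ^ 2 + 16 * C ^ 2) ^ (-(((n : ℝ) - 2) / 2)) *
        (B - ∫ s in (1 : ℝ)..t,
          (16 * C ^ 2 + s ^ 2) ^ (((n : ℝ) - 2) / 2) *
            (16 * C * Λ₀ - Λ * (16 * C ^ 2 + s ^ 2)) / (4 * s ^ 2)) := by
  have hσfun : σ = fun t : ℝ => t ^ 2 / (16 * C) + C := funext hσ
  subst hσfun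
  set m : ℝ := ((n : ℝ) - 2) / 2 with hm
  set g : ℝ → ℝ := fun s =>
    (16 * C ^ 2 + s ^ 2) ^ m * (16 * C * Λ₀ - Λ * (16 * C ^ 2 + s ^ 2)) / (4 * s ^ 2)
    with hg
  -- derivatives of σ
  have hds : deriv (fun t : ℝ => t ^ 2 / (16 * C) + C) = fun t : ℝ => t / (8 * C) := by
    funext u
    have h1 : HasDerivAt (fun t : ℝ => t ^ 2 / (16 * C) + C) (u / (8 * C)) u := by
      have := ((hasDerivAt_pow 2 u).div_const (16 * C)).add_const C
      refine this.congr_deriv ?_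
      field_simp
      ring
    exact h1.deriv
  have hdds : (deriv fun t : ℝ => t / (8 * C)) = fun _ : ℝ => 1 / (8 * C) := by
    funext u
    have h1 : HasDerivAt (fun t : ℝ => t / (8 * C)) (1 / (8 * C)) u :=
      (hasDerivAt_id u).div_const (8 * C)
    exact h1.deriv
  -- continuity of g
  have hgc : ∀ s : ℝ, s ≠ 0 → ContinuousAt g s := by
    intro s hs
    have h1 : ContinuousAt (fun s : ℝ => 16 * C ^ 2 + s ^ 2) s := by fun_prop
    have hb : (16 * C ^ 2 + s ^ 2) ≠ 0 := by positivity
    have h2 : ContinuousAt (fun s : ℝ => (16 * C ^ 2 + s ^ 2) ^ m) s :=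
      h1.rpow_const (Or.inl hb)
    have h3 : ContinuousAt (fun s : ℝ => 16 * C * Λ₀ - Λ * (16 * C ^ 2 + s ^ 2)) s := by fun_prop
    have h4 : ContinuousAt (fun s : ℝ => 4 * s ^ 2) s := by fun_prop
    exact (h2.mul h3).div h4 (by positivity)
  have hgcont : ContinuousOn g (Set.Ioi (0 : ℝ)) := fun s hs =>
    (hgc s (ne_of_gt hs)).continuousWithinAt
  -- the combined function
  set h : ℝ → ℝ := fun u => (u ^ 2 + 16 * C ^ 2) ^ m / u * y u + ∫ s in (1 : ℝ)..u, g s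
    with hh
  -- h has zero derivative on (0, ∞)
  have hderiv : ∀ t : ℝ, 0 < t → HasDerivAt h 0 t := by
    intro t ht
    have hP : (0 : ℝ) < t ^ 2 + 16 * C ^ 2 := by positivity
    have hbase : HasDerivAt (fun u : ℝ => u ^ 2 + 16 * C ^ 2) (2 * t) t := by
      have := (hasDerivAt_pow 2 t).add_const (16 * C ^ 2)
      simpa using this
    have hA : HasDerivAt (fun u : ℝ => (u ^ 2 + 16 * C ^ 2) ^ m)
        (2 * t * m * (t ^ 2 + 16 * C ^ 2) ^ (m - 1)) t := by
      have := hbase.rpow_const (p := m) (Or.inl hP.ne')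
      simpa using this
    have hμ : HasDerivAt (fun u : ℝ => (u ^ 2 + 16 * C ^ 2) ^ m / u)
        ((2 * t * m * (t ^ 2 + 16 * C ^ 2) ^ (m - 1) * t
          - (t ^ 2 + 16 * C ^ 2) ^ m * 1) / t ^ 2) t :=
      hA.div (hasDerivAt_id t) ht.ne'
    have hy' := (hy_diff t ht).hasDerivAt
    have hmul := hμ.mul hy'
    -- derivative of the integral part
    have hsub : Set.uIcc (1 : ℝ) t ⊆ Set.Ioi 0 := by
      intro x hx
      rcases Set.mem_uIcc.mp hx with ⟨h1, _⟩ | ⟨h1, _⟩ <;> simp only [Set.mem_Ioi] <;> linarith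
    have hgint : IntervalIntegrable g MeasureTheory.volume 1 t :=
      (hgcont.mono hsub).intervalIntegrable
    have hmeas := ContinuousOn.stronglyMeasurableAtFilter (μ := MeasureTheory.volume)
      isOpen_Ioi hgcont t ht
    have hint : HasDerivAt (fun u : ℝ => ∫ s in (1 : ℝ)..u, g s) (g t) t :=
      intervalIntegral.integral_hasDerivAt_right hgint hmeas (hgc t ht.ne')
    have htot := hmul.add hint
    -- the total derivative is zero
    have hode := hy_ode t ht
    simp only [hds, hdds] at hode
    have hσpos : (0 : ℝ) < t ^ 2 / (16 * C) + C := by positivity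
    have hyd : deriv y t =
        -(2 * y t * (((n : ℝ) - 4) * (t / (8 * C)) ^ 2 / (2 * (t ^ 2 / (16 * C) + C))
            - 1 / (4 * (t ^ 2 / (16 * C) + C)) + 1 / (8 * C))
          - (t ^ 2 / (16 * C) + C) * Λ + Λ₀) / (2 * (t / (8 * C))) := by
      rw [eq_div_iff (by positivity)]
      linear_combination hode
    have hPm1 : (t ^ 2 + 16 * C ^ 2) ^ (m - 1)
        = (t ^ 2 + 16 * C ^ 2) ^ m / (t ^ 2 + 16 * C ^ 2) := by
      rw [Real.rpow_sub hP, Real.rpow_one]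
    have hcomm : (16 * C ^ 2 + t ^ 2 : ℝ) = t ^ 2 + 16 * C ^ 2 := by ring
    have hzero : (2 * t * m * (t ^ 2 + 16 * C ^ 2) ^ (m - 1) * t
          - (t ^ 2 + 16 * C ^ 2) ^ m * 1) / t ^ 2 * y t
        + (t ^ 2 + 16 * C ^ 2) ^ m / t * deriv y t + g t = 0 := by
      rw [hg]
      simp only []
      rw [hcomm, hyd, hPm1, hm]
      field_simp
      ring
    rw [hh]
    refine htot.congr_deriv ?_
    exact hzero
  -- h is constant on (0, ∞)
  have hdiffOn : DifferentiableOn ℝ h (Set.Ioi (0 : ℝ)) := fun x hx =>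
    (hderiv x hx).differentiableAt.differentiableWithinAt
  have hfzero : ∀ x ∈ Set.Ioi (0 : ℝ), fderivWithin ℝ h (Set.Ioi (0 : ℝ)) x = 0 := by
    intro x hx
    rw [fderivWithin_of_isOpen isOpen_Ioi hx]
    have h1 := (hderiv x hx).hasFDerivAt.fderiv
    rw [h1]
    ext u
    simp
  have hconst : ∀ t ∈ Set.Ioi (0 : ℝ), h t = h 1 := fun t ht =>
    (convex_Ioi (0 : ℝ)).is_const_of_fderivWithin_eq_zero hdiffOn hfzero ht
      (by simp : (1 : ℝ) ∈ Set.Ioi (0 : ℝ))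
  refine ⟨h 1, fun t ht => ?_⟩
  have hP : (0 : ℝ) < t ^ 2 + 16 * C ^ 2 := by positivity
  have hPm : (0 : ℝ) < (t ^ 2 + 16 * C ^ 2) ^ m := Real.rpow_pos_of_pos hP m
  have hI : h 1 - (∫ s in (1 : ℝ)..t, g s) = (t ^ 2 + 16 * C ^ 2) ^ m / t * y t := by
    rw [← hconst t ht, hh]
    ring
  rw [Real.rpow_neg hP.le]
  rw [hI]
  field_simp
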